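/- arXiv:1703.10374 — 3 statements merged into one kernel-verified Lean document; each statement's English description precedes it below -/
import Mathlib

section
/- The relation 'there exists an f.p. coherent homotopy connecting f and f'' on the set of coherent maps over B0 from an inverse system X to an inverse system Y is an equivalence relation (reflexive, symmetric and transitive). -/
open Set Topology TopologicalSpace unitInterval

universe u

/-- `f` is a fiber preserving (f.p.) map from `(X, πX)` to `(Y, πY)` over `B0`. -/
def IsFPMap {B0 X Y : Type u} [TopologicalSpace B0] [TopologicalSpace X] [TopologicalSpace Y]
    (πX : X → B0) (πY : Y → B0) (f : X → Y) : Prop :=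
  Continuous f ∧ ∀ x, πY (f x) = πX x

/-- Two f.p. maps are f.p. homotopic (homotopic over `B0`). -/
def FPHomotopic {B0 X Y : Type u} [TopologicalSpace B0] [TopologicalSpace X] [TopologicalSpace Y]
    (πX : X → B0) (πY : Y → B0) (f g : X → Y) : Prop :=
  ∃ H : X × unitInterval → Y, Continuous H ∧
    (∀ x, H (x, 0) = f x) ∧ (∀ x, H (x, 1) = g x) ∧
    ∀ x t, πY (H (x, t)) = πX x

/-- A metrizable space `(Y, πY)` over `B0` is an absolute neighbourhood retract over `B0`:
for every closed f.p. embedding into a metrizable space over `B0` there is a neighbourhood of the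
image and an f.p. retraction of that neighbourhood onto the image. -/
def IsFiberANR (B0 : Type u) [TopologicalSpace B0] (Y : Type u) [TopologicalSpace Y]
    (πY : Y → B0) : Prop :=
  MetrizableSpace Y ∧ Continuous πY ∧
  ∀ (X : Type u) (_ : TopologicalSpace X), MetrizableSpace X →
    ∀ πX : X → B0, Continuous πX →
    ∀ i : Y → X, IsClosedEmbedding i → (∀ y, πX (i y) = πY y) →
    ∃ U : Set X, U ∈ nhdsSet (Set.range i) ∧
    ∃ r : U → X, Continuous r ∧ (∀ u : U, r u ∈ Set.range i) ∧
      (∀ u : U, πX (r u) = πX u) ∧ ∀ u : U, (u : X) ∈ Set.range i → r u = u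

/-- A metrizable space `(Y, πY)` over `B0` is an absolute neighbourhood extensor over `B0`. -/
def IsFiberANE (B0 : Type u) [TopologicalSpace B0] (Y : Type u) [TopologicalSpace Y]
    (πY : Y → B0) : Prop :=
  MetrizableSpace Y ∧ Continuous πY ∧
  ∀ (X : Type u) (_ : TopologicalSpace X), MetrizableSpace X →
    ∀ πX : X → B0, Continuous πX →
    ∀ A : Set X, IsClosed A →
    ∀ f : A → Y, Continuous f → (∀ a : A, πY (f a) = πX a) →
    ∃ U : Set X, U ∈ nhdsSet A ∧
    ∃ g : U → Y, Continuous g ∧ (∀ u : U, πY (g u) = πX u) ∧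
      ∀ (a : X) (ha : a ∈ A) (hu : a ∈ U), g ⟨a, hu⟩ = f ⟨a, ha⟩

/-- An open cover of a topological space. -/
def IsOpenCover {Y : Type u} [TopologicalSpace Y] (𝒰 : Set (Set Y)) : Prop :=
  (∀ V ∈ 𝒰, IsOpen V) ∧ ⋃₀ 𝒰 = Set.univ

/-- Two maps are `𝒰`-near. -/
def UNear {X Y : Type u} (𝒰 : Set (Set Y)) (f g : X → Y) : Prop :=
  ∀ x, ∃ V ∈ 𝒰, f x ∈ V ∧ g x ∈ V

/-- The (topological) weight of a space: the least cardinality of a basis of its topology. -/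
noncomputable def tweight (X : Type u) [TopologicalSpace X] : Cardinal.{u} :=
  sInf {c | ∃ B : Set (Set X), IsTopologicalBasis B ∧ Cardinal.mk B = c}

/-- An inverse system in `Top_{B0}`: a directed set of indices, spaces over `B0` and f.p.
bonding maps. -/
structure FibInvSys (B0 : Type u) [TopologicalSpace B0] : Type (u + 1) where
  Idx : Type u
  le : Idx → Idx → Prop
  le_refl : ∀ a, le a a
  le_trans : ∀ a b c, le a b → le b c → le a c
  directed : ∀ a b, ∃ c, le a c ∧ le b c
  obj : Idx → Type u
  topInst : ∀ a, TopologicalSpace (obj a)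
  proj : ∀ a, obj a → B0
  proj_cont : ∀ a, @Continuous _ _ (topInst a) _ (proj a)
  bond : ∀ a a', le a a' → obj a' → obj a
  bond_cont : ∀ a a' (h : le a a'), @Continuous _ _ (topInst a') (topInst a) (bond a a' h)
  bond_fp : ∀ a a' (h : le a a') (x : obj a'), proj a (bond a a' h x) = proj a' x
  bond_id : ∀ a (x : obj a), bond a a (le_refl a) x = x
  bond_comp : ∀ a a' a'' (h : le a a') (h' : le a' a'') (x : obj a''),
    bond a a' h (bond a' a'' h' x) = bond a a'' (le_trans a a' a'' h h') x

attribute [instance] FibInvSys.topInst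

/-- A morphism from a space `(X, πX)` over `B0` to an inverse system in `Top_{B0}`. -/
structure FibMapToSys {B0 : Type u} [TopologicalSpace B0] (X : Type u) [TopologicalSpace X]
    (πX : X → B0) (S : FibInvSys B0) where
  maps : ∀ a : S.Idx, X → S.obj a
  cont : ∀ a, Continuous (maps a)
  fp : ∀ a x, S.proj a (maps a x) = πX x
  comm : ∀ a a' (h : S.le a a') (x : X), S.bond a a' h (maps a' x) = maps a x

section Conditions

variable {B0 : Type u} [TopologicalSpace B0] (X : Type u) [TopologicalSpace X]
  (πX : X → B0) (S : FibInvSys B0)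

/-- Condition (R1) of a resolution over `B0`. -/
def CondR1 (p : FibMapToSys X πX S) : Prop :=
  ∀ (P : Type u) (_ : TopologicalSpace P) (πP : P → B0), IsFiberANR B0 P πP →
    ∀ 𝒰 : Set (Set P), IsOpenCover 𝒰 →
    ∀ h : X → P, IsFPMap πX πP h →
    ∃ (a : S.Idx) (f : S.obj a → P), IsFPMap (S.proj a) πP f ∧
      UNear 𝒰 h fun x => f (p.maps a x)

/-- Condition (R2) of a resolution over `B0`. -/
def CondR2 (p : FibMapToSys X πX S) : Prop :=
  ∀ (P : Type u) (_ : TopologicalSpace P) (πP : P → B0), IsFiberANR B0 P πP →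
    ∀ 𝒰 : Set (Set P), IsOpenCover 𝒰 →
    ∃ 𝒰' : Set (Set P), IsOpenCover 𝒰' ∧
      ∀ (a : S.Idx) (f f' : S.obj a → P), IsFPMap (S.proj a) πP f → IsFPMap (S.proj a) πP f' →
        UNear 𝒰' (fun x => f (p.maps a x)) (fun x => f' (p.maps a x)) →
        ∃ (a' : S.Idx) (h : S.le a a'),
          UNear 𝒰 (fun y => f (S.bond a a' h y)) fun y => f' (S.bond a a' h y)

/-- `p` is a resolution over `B0`. -/
def IsFibResolution (p : FibMapToSys X πX S) : Prop :=
  CondR1 X πX S p ∧ CondR2 X πX S p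

/-- Condition (E1) of an expansion over `B0`. -/
def CondE1 (p : FibMapToSys X πX S) : Prop :=
  ∀ (P : Type u) (_ : TopologicalSpace P) (πP : P → B0), IsFiberANR B0 P πP →
    ∀ f : X → P, IsFPMap πX πP f →
    ∃ (a : S.Idx) (h : S.obj a → P), IsFPMap (S.proj a) πP h ∧
      FPHomotopic πX πP (fun x => h (p.maps a x)) f

/-- Condition (E2) of an expansion over `B0`. -/
def CondE2 (p : FibMapToSys X πX S) : Prop :=
  ∀ (P : Type u) (_ : TopologicalSpace P) (πP : P → B0), IsFiberANR B0 P πP →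
    ∀ (a : S.Idx) (f f' : S.obj a → P), IsFPMap (S.proj a) πP f → IsFPMap (S.proj a) πP f' →
      FPHomotopic πX πP (fun x => f (p.maps a x)) (fun x => f' (p.maps a x)) →
      ∃ (a' : S.Idx) (h : S.le a a'),
        FPHomotopic (S.proj a') πP (fun y => f (S.bond a a' h y)) fun y => f' (S.bond a a' h y)

/-- Two f.p. homotopies `S, T : X × I → P` are f.p. homotopic rel `X × ∂I`. -/
def FPHomotopicRelEnds {P : Type u} [TopologicalSpace P] (πP : P → B0)
    (S T : X × unitInterval → P) : Prop :=
  ∃ G : (X × unitInterval) × unitInterval → P, Continuous G ∧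
    (∀ z, G (z, 0) = S z) ∧ (∀ z, G (z, 1) = T z) ∧
    (∀ z s, πP (G (z, s)) = πX z.1) ∧
    (∀ x s, G ((x, 0), s) = S (x, 0)) ∧ ∀ x s, G ((x, 1), s) = S (x, 1)

/-- Condition (SE2) of a strong expansion over `B0`. -/
def CondSE2 (p : FibMapToSys X πX S) : Prop :=
  ∀ (P : Type u) (_ : TopologicalSpace P) (πP : P → B0), IsFiberANR B0 P πP →
    ∀ (a : S.Idx) (f0 f1 : S.obj a → P), IsFPMap (S.proj a) πP f0 → IsFPMap (S.proj a) πP f1 →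
    ∀ Sh : X × unitInterval → P, Continuous Sh → (∀ x t, πP (Sh (x, t)) = πX x) →
      (∀ x, Sh (x, 0) = f0 (p.maps a x)) → (∀ x, Sh (x, 1) = f1 (p.maps a x)) →
      ∃ (a' : S.Idx) (h : S.le a a') (H : S.obj a' × unitInterval → P),
        Continuous H ∧ (∀ z t, πP (H (z, t)) = S.proj a' z) ∧
        (∀ z, H (z, 0) = f0 (S.bond a a' h z)) ∧
        (∀ z, H (z, 1) = f1 (S.bond a a' h z)) ∧
        FPHomotopicRelEnds X πX πP Sh fun zt => H (p.maps a' zt.1, zt.2)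

/-- `p` is a strong expansion over `B0`. -/
def IsFibStrongExpansion (p : FibMapToSys X πX S) : Prop :=
  CondE1 X πX S p ∧ CondSE2 X πX S p

end Conditions

/-! ### Coherent maps over `B0` -/

/-- The pushforward of a point of a standard simplex along a map of index sets. -/
noncomputable def pushSimplex {m k : ℕ} (h : Fin m → Fin k) (t : stdSimplex ℝ (Fin m)) :
    stdSimplex ℝ (Fin k) :=
  ⟨fun i => ∑ j ∈ Finset.univ.filter (fun j => h j = i), (t : Fin m → ℝ) j, by
    obtain ⟨h1, h2⟩ := t.2
    refine ⟨fun i => Finset.sum_nonneg fun j _ => h1 j, ?_⟩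
    rw [Finset.sum_fiberwise Finset.univ h fun j => (t : Fin m → ℝ) j]
    exact h2⟩

/-- The `j`-th face map `∂ⁿ_j : Δⁿ → Δⁿ⁺¹` (inserting `0` in coordinate `j`). -/
noncomputable def simplexFace {n : ℕ} (j : Fin (n + 2)) :
    stdSimplex ℝ (Fin (n + 1)) → stdSimplex ℝ (Fin (n + 2)) :=
  pushSimplex (Fin.succAbove j)

/-- The `j`-th degeneracy map `σⁿ_j : Δⁿ⁺¹ → Δⁿ` (adding coordinates `j` and `j + 1`). -/
noncomputable def simplexDegen {n : ℕ} (j : Fin (n + 1)) :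
    stdSimplex ℝ (Fin (n + 2)) → stdSimplex ℝ (Fin (n + 1)) :=
  pushSimplex (Fin.predAbove j)

/-- The vertex of the `0`-simplex `Δ⁰`. -/
noncomputable def simplexPt : stdSimplex ℝ (Fin 1) :=
  ⟨fun _ => 1, fun _ => zero_le_one, by simp⟩

namespace FibInvSys

variable {B0 : Type u} [TopologicalSpace B0]

/-- `𝒜ⁿ`: increasing sequences `(α₀ ≤ ⋯ ≤ αₙ)` of indices of the system `S`. -/
def IncSeq (S : FibInvSys B0) (n : ℕ) : Type u :=
  {β : Fin (n + 1) → S.Idx // ∀ i j : Fin (n + 1), i ≤ j → S.le (β i) (β j)}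

/-- The `j`-th face operator `d_j : 𝒜ⁿ⁺¹ → 𝒜ⁿ`, deleting the `j`-th entry. -/
def seqFace (S : FibInvSys B0) {n : ℕ} (j : Fin (n + 2)) (β : S.IncSeq (n + 1)) : S.IncSeq n :=
  ⟨β.1 ∘ j.succAbove, fun i i' h => β.2 _ _ ((Fin.strictMono_succAbove j).monotone h)⟩

/-- The `j`-th degeneracy operator `s_j : 𝒜ⁿ → 𝒜ⁿ⁺¹`, repeating the `j`-th entry. -/
def seqDegen (S : FibInvSys B0) {n : ℕ} (j : Fin (n + 1)) (β : S.IncSeq n) : S.IncSeq (n + 1) :=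
  ⟨β.1 ∘ j.predAbove, fun i i' h => β.2 _ _ (Fin.predAbove_right_monotone j h)⟩

/-- The constant sequence `(b) ∈ ℬ⁰`. -/
def singleSeq (S : FibInvSys B0) (b : S.Idx) : S.IncSeq 0 :=
  ⟨fun _ => b, fun _ _ _ => S.le_refl b⟩

/-- The sequence `(b0 ≤ b1) ∈ ℬ¹`. -/
def pairSeq (S : FibInvSys B0) (b0 b1 : S.Idx) (h : S.le b0 b1) : S.IncSeq 1 :=
  ⟨fun i => if i.1 = 0 then b0 else b1, by
    intro i j hij
    by_cases hi : i.1 = 0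
    · by_cases hj : j.1 = 0
      · simp only [hi, hj, if_pos]
        exact S.le_refl b0
      · simp only [if_pos hi, if_neg hj]
        exact h
    · have hj : ¬ j.1 = 0 := by
        intro hj0
        exact hi (Nat.le_zero.mp (hj0 ▸ (hij : i.1 ≤ j.1)))
      simp only [if_neg hi, if_neg hj]
      exact S.le_refl b1⟩

/-- The inverse system `X × I = (X_α × I, p_{αα'} × 1_I, 𝒜)` over `B0`. -/
def prodI (S : FibInvSys B0) : FibInvSys B0 where
  Idx := S.Idx
  le := S.le
  le_refl := S.le_refl
  le_trans := S.le_trans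
  directed := S.directed
  obj a := S.obj a × unitInterval
  topInst a := inferInstance
  proj a z := S.proj a z.1
  proj_cont a := (S.proj_cont a).comp continuous_fst
  bond a a' h z := (S.bond a a' h z.1, z.2)
  bond_cont a a' h := Continuous.prodMk ((S.bond_cont a a' h).comp continuous_fst) continuous_snd
  bond_fp a a' h z := S.bond_fp a a' h z.1
  bond_id a z := by simp [S.bond_id]
  bond_comp a a' a'' h h' z := by simp [S.bond_comp]

end FibInvSys

/-- A coherent map `f : X → Y` over `B0` between inverse systems in `Top_{B0}`: an index
function `φ` on increasing sequences together with f.p. maps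
`f_β : X_{φ(β)} × Δⁿ → Y_{β₀}` satisfying the coherence conditions for faces and
degeneracies. -/
structure FPCoherentMap {B0 : Type u} [TopologicalSpace B0] (S T : FibInvSys B0) where
  φ : ∀ {n : ℕ}, T.IncSeq n → S.Idx
  f : ∀ {n : ℕ} (β : T.IncSeq n), S.obj (φ β) × stdSimplex ℝ (Fin (n + 1)) → T.obj (β.1 0)
  f_cont : ∀ {n : ℕ} (β : T.IncSeq n), Continuous (f β)
  f_fp : ∀ {n : ℕ} (β : T.IncSeq n) (x : S.obj (φ β)) (t : stdSimplex ℝ (Fin (n + 1))),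
    T.proj (β.1 0) (f β (x, t)) = S.proj (φ β) x
  φ_face : ∀ {n : ℕ} (β : T.IncSeq (n + 1)) (j : Fin (n + 2)),
    S.le (φ (T.seqFace j β)) (φ β)
  φ_degen : ∀ {n : ℕ} (β : T.IncSeq n) (j : Fin (n + 1)),
    S.le (φ β) (φ (T.seqDegen j β))
  coh_face : ∀ {n : ℕ} (β : T.IncSeq (n + 1)) (j : Fin (n + 2))
      (hb : T.le (β.1 0) ((T.seqFace j β).1 0)) (x : S.obj (φ β))
      (t : stdSimplex ℝ (Fin (n + 1))),
      f β (x, simplexFace j t) =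
        T.bond _ _ hb (f (T.seqFace j β) (S.bond _ _ (φ_face β j) x, t))
  coh_degen : ∀ {n : ℕ} (β : T.IncSeq n) (j : Fin (n + 1))
      (hb : T.le (β.1 0) ((T.seqDegen j β).1 0)) (x : S.obj (φ (T.seqDegen j β)))
      (t : stdSimplex ℝ (Fin (n + 2))),
      f β (S.bond _ _ (φ_degen β j) x, simplexDegen j t) =
        T.bond _ _ hb (f (T.seqDegen j β) (x, t))

/-- An f.p. coherent homotopy connecting the coherent maps `f` and `g`: a coherent map
`F : X × I → Y` restricting to `f` at `0` and to `g` at `1`. -/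
structure FPCoherentHomotopy {B0 : Type u} [TopologicalSpace B0] {S T : FibInvSys B0}
    (f g : FPCoherentMap S T) where
  F : FPCoherentMap S.prodI T
  le_left : ∀ {n : ℕ} (β : T.IncSeq n), S.le (f.φ β) (F.φ β)
  le_right : ∀ {n : ℕ} (β : T.IncSeq n), S.le (g.φ β) (F.φ β)
  at_zero : ∀ {n : ℕ} (β : T.IncSeq n) (x : S.obj (F.φ β)) (t : stdSimplex ℝ (Fin (n + 1))),
    F.f β ((x, 0), t) = f.f β (S.bond _ _ (le_left β) x, t)
  at_one : ∀ {n : ℕ} (β : T.IncSeq n) (x : S.obj (F.φ β)) (t : stdSimplex ℝ (Fin (n + 1))),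
    F.f β ((x, 1), t) = g.f β (S.bond _ _ (le_right β) x, t)

/-- Two coherent maps over `B0` are f.p. coherently homotopic. -/
def FPCohHomotopic {B0 : Type u} [TopologicalSpace B0] {S T : FibInvSys B0}
    (f g : FPCoherentMap S T) : Prop :=
  Nonempty (FPCoherentHomotopy f g)

/-! ### Auxiliary material for Proposition 2.1 -/

section AuxEquiv

open Classical

variable {B0 : Type u} [TopologicalSpace B0] {S T : FibInvSys B0}

@[simp] lemma FibInvSys.bond_id' (a : S.Idx) (h : S.le a a) (x : S.obj a) :
    S.bond a a h x = x := S.bond_id a x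

lemma FibInvSys.bond_comp' {a a' a'' : S.Idx} (h : S.le a a') (h' : S.le a' a'')
    (h'' : S.le a a'') (x : S.obj a'') :
    S.bond a a' h (S.bond a' a'' h' x) = S.bond a a'' h'' x :=
  S.bond_comp a a' a'' h h' x

/-- A chosen upper bound of two indices of a directed system. -/
noncomputable def FibInvSys.ub2 (S : FibInvSys B0) (a b : S.Idx) : S.Idx :=
  (S.directed a b).choose

lemma FibInvSys.le_ub2_left (a b : S.Idx) : S.le a (S.ub2 a b) :=
  (S.directed a b).choose_spec.1

lemma FibInvSys.le_ub2_right (a b : S.Idx) : S.le b (S.ub2 a b) :=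
  (S.directed a b).choose_spec.2

/-- A chosen upper bound of a finite family of indices of a directed system. -/
noncomputable def FibInvSys.ubFin (S : FibInvSys B0) : ∀ {m : ℕ}, (Fin (m + 1) → S.Idx) → S.Idx
  | 0, g => g 0
  | _ + 1, g => S.ub2 (g 0) (S.ubFin (g ∘ Fin.succ))

lemma FibInvSys.le_ubFin : ∀ {m : ℕ} (g : Fin (m + 1) → S.Idx) (i : Fin (m + 1)),
    S.le (g i) (S.ubFin g)
  | 0, g, i => by
    have : i = 0 := Fin.fin_one_eq_zero i
    subst this
    exact S.le_refl _
  | m + 1, g, i => by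
    induction i using Fin.cases with
    | zero => exact S.le_ub2_left _ _
    | succ k =>
      exact S.le_trans _ _ _ (FibInvSys.le_ubFin (g ∘ Fin.succ) k) (S.le_ub2_right _ _)

lemma FibInvSys.seqFace_seqDegen {n : ℕ} (j : Fin (n + 1)) (β : T.IncSeq n) :
    T.seqFace j.castSucc (T.seqDegen j β) = β := by
  apply Subtype.ext
  funext i
  exact congrArg β.1 (Fin.predAbove_succAbove j i)

/-- A common refinement of two index functions of coherent maps, closed under faces. -/
noncomputable def FibInvSys.theta (S T : FibInvSys B0)
    (Φ Ψ : ∀ n : ℕ, T.IncSeq n → S.Idx) : ∀ n : ℕ, T.IncSeq n → S.Idx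
  | 0, β => S.ub2 (Φ 0 β) (Ψ 0 β)
  | n + 1, β => S.ub2 (S.ub2 (Φ (n + 1) β) (Ψ (n + 1) β))
      (S.ubFin fun j : Fin (n + 2) => FibInvSys.theta S T Φ Ψ n (T.seqFace j β))

lemma FibInvSys.le_theta_left (Φ Ψ : ∀ n : ℕ, T.IncSeq n → S.Idx) :
    ∀ (n : ℕ) (β : T.IncSeq n), S.le (Φ n β) (FibInvSys.theta S T Φ Ψ n β)
  | 0, β => S.le_ub2_left _ _
  | n + 1, β => S.le_trans _ _ _ (S.le_ub2_left _ _) (S.le_ub2_left _ _)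

lemma FibInvSys.le_theta_right (Φ Ψ : ∀ n : ℕ, T.IncSeq n → S.Idx) :
    ∀ (n : ℕ) (β : T.IncSeq n), S.le (Ψ n β) (FibInvSys.theta S T Φ Ψ n β)
  | 0, β => S.le_ub2_right _ _
  | n + 1, β => S.le_trans _ _ _ (S.le_ub2_right _ _) (S.le_ub2_left _ _)

lemma FibInvSys.theta_face (Φ Ψ : ∀ n : ℕ, T.IncSeq n → S.Idx)
    (n : ℕ) (β : T.IncSeq (n + 1)) (j : Fin (n + 2)) :
    S.le (FibInvSys.theta S T Φ Ψ n (T.seqFace j β)) (FibInvSys.theta S T Φ Ψ (n + 1) β) :=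
  S.le_trans _ _ _ (S.le_ubFin (fun j : Fin (n + 2) =>
    FibInvSys.theta S T Φ Ψ n (T.seqFace j β)) j) (S.le_ub2_right _ _)

lemma FibInvSys.theta_degen (Φ Ψ : ∀ n : ℕ, T.IncSeq n → S.Idx)
    (n : ℕ) (β : T.IncSeq n) (j : Fin (n + 1)) :
    S.le (FibInvSys.theta S T Φ Ψ n β) (FibInvSys.theta S T Φ Ψ (n + 1) (T.seqDegen j β)) := by
  have := FibInvSys.theta_face (S := S) (T := T) Φ Ψ n (T.seqDegen j β) j.castSucc
  rwa [FibInvSys.seqFace_seqDegen] at this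

/-- Rescaling the first half of the interval. -/
noncomputable def loI (t : unitInterval) : unitInterval :=
  Set.projIcc 0 1 zero_le_one (2 * (t : ℝ))

/-- Rescaling the second half of the interval. -/
noncomputable def hiI (t : unitInterval) : unitInterval :=
  Set.projIcc 0 1 zero_le_one (2 * (t : ℝ) - 1)

lemma continuous_loI : Continuous loI :=
  continuous_projIcc.comp (by fun_prop)

lemma continuous_hiI : Continuous hiI :=
  continuous_projIcc.comp (by fun_prop)

lemma loI_zero : loI 0 = 0 := by
  apply Subtype.ext
  simp [loI, Set.projIcc]

lemma hiI_one : hiI 1 = 1 := by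
  apply Subtype.ext
  simp [hiI, Set.projIcc]
  norm_num

lemma loI_half {t : unitInterval} (h : (t : ℝ) = 1 / 2) : loI t = 1 := by
  apply Subtype.ext
  simp [loI, Set.projIcc, h]

lemma hiI_half {t : unitInterval} (h : (t : ℝ) = 1 / 2) : hiI t = 0 := by
  apply Subtype.ext
  simp [hiI, Set.projIcc, h]

end AuxEquiv

@[simp] lemma FibInvSys.prodI_bond {B0 : Type u} [TopologicalSpace B0] (S : FibInvSys B0)
    {a a' : S.Idx} (h : S.le a a') (z : S.prodI.obj a') :
    S.prodI.bond a a' h z = (S.bond a a' h z.1, z.2) := rfl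

instance FibInvSys.prodITopAux {B0 : Type u} [TopologicalSpace B0] (S : FibInvSys B0)
    (a : S.Idx) : TopologicalSpace (S.prodI.obj a) := S.prodI.topInst a

instance FibInvSys.objTopAux {B0 : Type u} [TopologicalSpace B0] (S : FibInvSys B0)
    (a : S.prodI.Idx) : TopologicalSpace (S.obj a) := S.topInst a

/-- Proposition 2.1: the f.p. coherent homotopy relation on coherent maps over `B0` between two
inverse systems is an equivalence relation. -/
theorem fpCohHomotopic_equivalence (B0 : Type u) [TopologicalSpace B0] [MetrizableSpace B0]
    (S T : FibInvSys B0) :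
    Reflexive (fun f g : FPCoherentMap S T => FPCohHomotopic f g) ∧
    Symmetric (fun f g : FPCoherentMap S T => FPCohHomotopic f g) ∧
    Transitive (fun f g : FPCoherentMap S T => FPCohHomotopic f g) := by
  refine ⟨?_, ?_, ?_⟩
  · -- Reflexivity: the constant homotopy.
    intro f
    exact ⟨{
      F := {
        φ := fun {n} β => f.φ β
        f := fun {n} β w => f.f β (w.1.1, w.2)
        f_cont := fun {n} β => (f.f_cont β).comp
          (Continuous.prodMk (continuous_fst.comp continuous_fst) continuous_snd)
        f_fp := fun {n} β x t => f.f_fp β x.1 t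
        φ_face := fun {n} β j => f.φ_face β j
        φ_degen := fun {n} β j => f.φ_degen β j
        coh_face := fun {n} β j hb x t => f.coh_face β j hb x.1 t
        coh_degen := fun {n} β j hb x t => f.coh_degen β j hb x.1 t }
      le_left := fun {n} β => S.le_refl _
      le_right := fun {n} β => S.le_refl _
      at_zero := fun {n} β x t => by
        dsimp only
        rw [S.bond_id']
      at_one := fun {n} β x t => by
        dsimp only
        rw [S.bond_id'] }⟩
  · -- Symmetry: reverse the homotopy parameter.
    intro f g hfg
    obtain ⟨H⟩ := hfg
    exact ⟨{
      F := {
        φ := fun {n} β => H.F.φ β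
        f := fun {n} β w => H.F.f β ((w.1.1, unitInterval.symm w.1.2), w.2)
        f_cont := fun {n} β => (H.F.f_cont β).comp
          (Continuous.prodMk
            (Continuous.prodMk (continuous_fst.comp continuous_fst)
              (unitInterval.continuous_symm.comp (continuous_snd.comp continuous_fst)))
            continuous_snd)
        f_fp := fun {n} β x t => H.F.f_fp β (x.1, unitInterval.symm x.2) t
        φ_face := fun {n} β j => H.F.φ_face β j
        φ_degen := fun {n} β j => H.F.φ_degen β j
        coh_face := fun {n} β j hb x t => H.F.coh_face β j hb (x.1, unitInterval.symm x.2) t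
        coh_degen := fun {n} β j hb x t => H.F.coh_degen β j hb (x.1, unitInterval.symm x.2) t }
      le_left := fun {n} β => H.le_right β
      le_right := fun {n} β => H.le_left β
      at_zero := fun {n} β x t => by
        show H.F.f β ((x, unitInterval.symm 0), t) = _
        rw [unitInterval.symm_zero]
        exact H.at_one β x t
      at_one := fun {n} β x t => by
        show H.F.f β ((x, unitInterval.symm 1), t) = _
        rw [unitInterval.symm_one]
        exact H.at_zero β x t }⟩
  · -- Transitivity: concatenate the homotopies over a common refinement of the indices.
    intro f g h hfg hgh
    obtain ⟨H1⟩ := hfg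
    obtain ⟨H2⟩ := hgh
    classical
    set Φ : ∀ n : ℕ, T.IncSeq n → S.Idx := fun n β => H1.F.φ β with hΦdef
    set Ψ : ∀ n : ℕ, T.IncSeq n → S.Idx := fun n β => H2.F.φ β with hΨdef
    have hΦ : ∀ (n : ℕ) (β : T.IncSeq n), S.le (H1.F.φ β) (FibInvSys.theta S T Φ Ψ n β) :=
      fun n β => FibInvSys.le_theta_left Φ Ψ n β
    have hΨ : ∀ (n : ℕ) (β : T.IncSeq n), S.le (H2.F.φ β) (FibInvSys.theta S T Φ Ψ n β) :=
      fun n β => FibInvSys.le_theta_right Φ Ψ n β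
    refine ⟨{
      F := {
        φ := fun {n} β => FibInvSys.theta S T Φ Ψ n β
        f := fun {n} β w =>
          if ((w.1.2 : unitInterval) : ℝ) ≤ 1 / 2 then
            H1.F.f β ((S.bond _ _ (hΦ n β) w.1.1, loI w.1.2), w.2)
          else
            H2.F.f β ((S.bond _ _ (hΨ n β) w.1.1, hiI w.1.2), w.2)
        f_cont := fun {n} β => by
          refine Continuous.if_le ?_ ?_ ?_ continuous_const ?_
          · exact (H1.F.f_cont β).comp (Continuous.prodMk
              (Continuous.prodMk
                ((S.bond_cont _ _ _).comp (continuous_fst.comp continuous_fst))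
                (continuous_loI.comp (continuous_snd.comp continuous_fst)))
              continuous_snd)
          · exact (H2.F.f_cont β).comp (Continuous.prodMk
              (Continuous.prodMk
                ((S.bond_cont _ _ _).comp (continuous_fst.comp continuous_fst))
                (continuous_hiI.comp (continuous_snd.comp continuous_fst)))
              continuous_snd)
          · exact continuous_subtype_val.comp (continuous_snd.comp continuous_fst)
          · intro w hw
            erw [loI_half hw, hiI_half hw, H1.at_one, H2.at_zero, S.bond_comp, S.bond_comp]
        f_fp := fun {n} β x t => by
          dsimp only
          split_ifs with hw
          · exact (H1.F.f_fp β _ _).trans (S.bond_fp _ _ _ _)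
          · exact (H2.F.f_fp β _ _).trans (S.bond_fp _ _ _ _)
        φ_face := fun {n} β j => FibInvSys.theta_face Φ Ψ n β j
        φ_degen := fun {n} β j => FibInvSys.theta_degen Φ Ψ n β j
        coh_face := fun {n} β j hb x t => by
          dsimp only [FibInvSys.prodI_bond]
          split_ifs with hw
          · erw [H1.F.coh_face β j hb]
            erw [if_pos hw, FibInvSys.prodI_bond, S.bond_comp, S.bond_comp]
          · erw [H2.F.coh_face β j hb]
            erw [if_neg hw, FibInvSys.prodI_bond, S.bond_comp, S.bond_comp]
        coh_degen := fun {n} β j hb x t => by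
          dsimp only [FibInvSys.prodI_bond]
          split_ifs with hw
          · erw [← H1.F.coh_degen β j hb]
            erw [if_pos hw, FibInvSys.prodI_bond, S.bond_comp, S.bond_comp]
          · erw [← H2.F.coh_degen β j hb]
            erw [if_neg hw, FibInvSys.prodI_bond, S.bond_comp, S.bond_comp] }
      le_left := fun {n} β => S.le_trans _ _ _ (H1.le_left β) (hΦ n β)
      le_right := fun {n} β => S.le_trans _ _ _ (H2.le_right β) (hΨ n β)
      at_zero := fun {n} β x t => by
        dsimp only
        erw [if_pos (by norm_num : (((0 : unitInterval) : ℝ)) ≤ 1 / 2), loI_zero,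
          H1.at_zero, S.bond_comp]
      at_one := fun {n} β x t => by
        dsimp only
        erw [if_neg (by norm_num : ¬ (((1 : unitInterval) : ℝ)) ≤ 1 / 2), hiI_one,
          H2.at_one, S.bond_comp] }⟩
end

section
/- If (f_β, φ) and (f'_β, φ') are equivalent morphisms of inverse systems X → Y over B0 (in particular, if they are two choices of extension of the same morphism), then the coherent maps f and f' over B0 associated with them (defined by f_β(x, t) = f_{β0}(p_{φ(β0)φ(β)}(x)) and f'_β(x, t) = f'_{β0}(p_{φ'(β0)φ'(β)}(x))) are connected by an f.p. coherent homotopy. -/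
open Set Topology TopologicalSpace unitInterval

universe u

namespace FibCohAux

variable {B0 : Type u} [TopologicalSpace B0]

theorem bond_bond (S : FibInvSys B0) {a b c : S.Idx} (h1 : S.le a b) (h2 : S.le b c)
    (h3 : S.le a c) (x : S.obj c) :
    S.bond a b h1 (S.bond b c h2 x) = S.bond a c h3 x :=
  S.bond_comp a b c h1 h2 x

theorem le_foldl (S : FibInvSys B0) (u : S.Idx → S.Idx → S.Idx)
    (hu : ∀ a b, S.le a (u a b) ∧ S.le b (u a b)) :
    ∀ (l : List S.Idx) (x : S.Idx), S.le x (l.foldl u x) ∧ ∀ y ∈ l, S.le y (l.foldl u x)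
  | [], x => ⟨S.le_refl x, by simp⟩
  | a :: l, x => by
    obtain ⟨h1, h2⟩ := le_foldl S u hu l (u x a)
    refine ⟨S.le_trans _ _ _ (hu x a).1 h1, ?_⟩
    intro y hy
    rcases List.mem_cons.mp hy with rfl | hy
    · exact S.le_trans _ _ _ (hu x y).2 h1
    · exact h2 y hy

noncomputable def mkPhi (S T : FibInvSys B0) (u : S.Idx → S.Idx → S.Idx)
    (base : ∀ n, T.IncSeq n → S.Idx) : ∀ n, T.IncSeq n → S.Idx
  | 0, β => base 0 β
  | n + 1, β =>
      (List.ofFn fun j : Fin (n + 2) => mkPhi S T u base n (T.seqFace j β)).foldl u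
        (base (n + 1) β)

theorem le_base_mkPhi (S T : FibInvSys B0) (u : S.Idx → S.Idx → S.Idx)
    (hu : ∀ a b, S.le a (u a b) ∧ S.le b (u a b)) (base : ∀ n, T.IncSeq n → S.Idx) :
    ∀ n (β : T.IncSeq n), S.le (base n β) (mkPhi S T u base n β)
  | 0, β => S.le_refl _
  | n + 1, β => (le_foldl S u hu _ _).1

theorem face_le_mkPhi (S T : FibInvSys B0) (u : S.Idx → S.Idx → S.Idx)
    (hu : ∀ a b, S.le a (u a b) ∧ S.le b (u a b)) (base : ∀ n, T.IncSeq n → S.Idx)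
    (n : ℕ) (β : T.IncSeq (n + 1)) (j : Fin (n + 2)) :
    S.le (mkPhi S T u base n (T.seqFace j β)) (mkPhi S T u base (n + 1) β) := by
  refine (le_foldl S u hu _ _).2 _ ?_
  simp only [List.mem_ofFn]
  exact ⟨j, rfl⟩

theorem seqFace_seqDegen (T : FibInvSys B0) {n : ℕ} (j : Fin (n + 1)) (β : T.IncSeq n) :
    T.seqFace j.castSucc (T.seqDegen j β) = β := by
  apply Subtype.ext
  funext i
  show β.1 (j.predAbove (j.castSucc.succAbove i)) = β.1 i
  rw [Fin.predAbove_succAbove]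

end FibCohAux

/-- Equivalent morphisms of inverse systems over `B0` induce f.p. coherently homotopic
coherent maps. -/
theorem equivalent_morphisms_cohHomotopic (B0 : Type u) [TopologicalSpace B0]
    [MetrizableSpace B0] (S T : FibInvSys B0)
    (φ0 φ0' : T.Idx → S.Idx)
    (f0 : ∀ b : T.Idx, S.obj (φ0 b) → T.obj b) (f0' : ∀ b : T.Idx, S.obj (φ0' b) → T.obj b)
    (hf0 : ∀ b : T.Idx, IsFPMap (S.proj (φ0 b)) (T.proj b) (f0 b))
    (hf0' : ∀ b : T.Idx, IsFPMap (S.proj (φ0' b)) (T.proj b) (f0' b))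
    (hequiv : ∀ b : T.Idx, ∃ (a : S.Idx) (h1 : S.le (φ0 b) a) (h2 : S.le (φ0' b) a),
      ∀ x : S.obj a, f0 b (S.bond _ _ h1 x) = f0' b (S.bond _ _ h2 x))
    (F F' : FPCoherentMap S T)
    (hFge : ∀ (n : ℕ) (β : T.IncSeq n), S.le (φ0 (β.1 0)) (F.φ β))
    (hF : ∀ (n : ℕ) (β : T.IncSeq n) (h : S.le (φ0 (β.1 0)) (F.φ β))
      (x : S.obj (F.φ β)) (t : stdSimplex ℝ (Fin (n + 1))),
      F.f β (x, t) = f0 (β.1 0) (S.bond _ _ h x))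
    (hF'ge : ∀ (n : ℕ) (β : T.IncSeq n), S.le (φ0' (β.1 0)) (F'.φ β))
    (hF' : ∀ (n : ℕ) (β : T.IncSeq n) (h : S.le (φ0' (β.1 0)) (F'.φ β))
      (x : S.obj (F'.φ β)) (t : stdSimplex ℝ (Fin (n + 1))),
      F'.f β (x, t) = f0' (β.1 0) (S.bond _ _ h x)) :
    FPCohHomotopic F F' := by
  classical
  choose a ha1 ha2 ha3 using hequiv
  choose u hu1 hu2 using fun c d => S.directed c d
  have hu : ∀ c d, S.le c (u c d) ∧ S.le d (u c d) := fun c d => ⟨hu1 c d, hu2 c d⟩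
  set base : ∀ n, T.IncSeq n → S.Idx :=
    fun n β => u (u (F.φ β) (F'.φ β)) (a (β.1 0)) with hbase_def
  set Φ : ∀ n, T.IncSeq n → S.Idx := FibCohAux.mkPhi S T u base with hΦ_def
  have hbase : ∀ n (β : T.IncSeq n), S.le (base n β) (Φ n β) :=
    FibCohAux.le_base_mkPhi S T u hu base
  have hFle : ∀ n (β : T.IncSeq n), S.le (F.φ β) (Φ n β) := fun n β =>
    S.le_trans _ _ _ (S.le_trans _ _ _ (hu1 _ _) (hu1 _ _)) (hbase n β)
  have hF'le : ∀ n (β : T.IncSeq n), S.le (F'.φ β) (Φ n β) := fun n β =>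
    S.le_trans _ _ _ (S.le_trans _ _ _ (hu2 _ _) (hu1 _ _)) (hbase n β)
  have hale : ∀ n (β : T.IncSeq n), S.le (a (β.1 0)) (Φ n β) := fun n β =>
    S.le_trans _ _ _ (hu2 _ _) (hbase n β)
  have hface : ∀ n (β : T.IncSeq (n + 1)) (j : Fin (n + 2)),
      S.le (Φ n (T.seqFace j β)) (Φ (n + 1) β) :=
    FibCohAux.face_le_mkPhi S T u hu base
  have hdegen : ∀ n (β : T.IncSeq n) (j : Fin (n + 1)),
      S.le (Φ n β) (Φ (n + 1) (T.seqDegen j β)) := by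
    intro n β j
    have := hface n (T.seqDegen j β) j.castSucc
    rwa [FibCohAux.seqFace_seqDegen] at this
  have h0 : ∀ n (β : T.IncSeq n), S.le (φ0 (β.1 0)) (Φ n β) := fun n β =>
    S.le_trans _ _ _ (hFge n β) (hFle n β)
  have h0' : ∀ n (β : T.IncSeq n), S.le (φ0' (β.1 0)) (Φ n β) := fun n β =>
    S.le_trans _ _ _ (hF'ge n β) (hF'le n β)
  refine ⟨⟨⟨fun {n} β => Φ n β,
      fun {n} β zt => f0 (β.1 0) (S.bond _ _ (h0 n β) zt.1.1), ?_, ?_, ?_, ?_, ?_, ?_⟩,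
      fun {n} β => hFle n β, fun {n} β => hF'le n β, ?_, ?_⟩⟩
  · -- continuity
    intro n β
    show Continuous (fun zt : (S.obj (Φ n β) × unitInterval) × stdSimplex ℝ (Fin (n + 1)) =>
      f0 (β.1 0) (S.bond _ _ (h0 n β) zt.1.1))
    exact (hf0 _).1.comp ((S.bond_cont _ _ _).comp (continuous_fst.comp continuous_fst))
  · -- f_fp
    intro n β x t
    show T.proj (β.1 0) (f0 (β.1 0) _) = S.proj (Φ n β) x.1
    rw [(hf0 _).2, S.bond_fp]
  · -- φ_face
    intro n β j
    exact hface n β j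
  · -- φ_degen
    intro n β j
    exact hdegen n β j
  · -- coh_face
    intro n β j hb x t
    have key := F.coh_face β j hb (S.bond _ _ (hFle (n + 1) β) x.1) t
    rw [hF _ β (hFge _ β), hF _ (T.seqFace j β) (hFge _ _)] at key
    show f0 (β.1 0) (S.bond _ _ (h0 (n + 1) β) x.1) = T.bond _ _ hb
      (f0 ((T.seqFace j β).1 0) (S.bond _ _ (h0 n (T.seqFace j β))
        (S.bond _ _ (hface n β j) x.1)))
    simp only [S.bond_comp] at key ⊢
    exact key
  · -- coh_degen
    intro n β j hb x t
    have key := F.coh_degen β j hb (S.bond _ _ (hFle (n + 1) (T.seqDegen j β)) x.1) t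
    rw [hF _ β (hFge _ β), hF _ (T.seqDegen j β) (hFge _ _)] at key
    show f0 (β.1 0) (S.bond _ _ (h0 n β) (S.bond _ _ (hdegen n β j) x.1)) = T.bond _ _ hb
      (f0 ((T.seqDegen j β).1 0) (S.bond _ _ (h0 (n + 1) (T.seqDegen j β)) x.1))
    simp only [S.bond_comp] at key ⊢
    exact key
  · -- at_zero
    intro n β x t
    show f0 (β.1 0) (S.bond _ _ (h0 n β) x) =
      F.f β (S.bond _ _ (hFle n β) x, t)
    rw [hF _ β (hFge _ β), FibCohAux.bond_bond S (hFge _ β) (hFle n β) (h0 n β) x]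
  · -- at_one
    intro n β x t
    show f0 (β.1 0) (S.bond _ _ (h0 n β) x) =
      F'.f β (S.bond _ _ (hF'le n β) x, t)
    rw [hF' _ β (hF'ge _ β), FibCohAux.bond_bond S (hF'ge _ β) (hF'le n β) (h0' n β) x,
      ← FibCohAux.bond_bond S (ha1 (β.1 0)) (hale n β) (h0 n β) x,
      ← FibCohAux.bond_bond S (ha2 (β.1 0)) (hale n β) (h0' n β) x]
    exact ha3 _ _
end

section
/- If Y1 and Y2 are ANR_{B0}-spaces, then their fiber product Y1 ×_{B0} Y2 = {(y1, y2) ∈ Y1 × Y2 : π_{Y1}(y1) = π_{Y2}(y2)}, regarded as a space over B0 via (y1, y2) ↦ π_{Y1}(y1), is an ANR_{B0}-space. -/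
open Set Topology TopologicalSpace unitInterval

universe u

section Auxiliary

open Filter
open scoped BoundedContinuousFunction

theorem dugundji_extension {X : Type*} [MetricSpace X] {E : Type*} [NormedAddCommGroup E]
    [NormedSpace ℝ E] (A : Set X) (hA : IsClosed A) (hAne : A.Nonempty)
    (f : A → E) (hf : Continuous f) :
    ∃ g : X → E, Continuous g ∧ (∀ a : A, g a = f a) ∧
      ∀ x, g x ∈ convexHull ℝ (Set.range f) := by
  classical
  have hDpos : ∀ p : ↥(Aᶜ), 0 < Metric.infDist (p : X) A := fun p =>
    (hA.notMem_iff_infDist_pos hAne).1 p.2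
  have hanch : ∀ p : ↥(Aᶜ), ∃ a ∈ A, dist (p : X) a < 2 * Metric.infDist (p : X) A := by
    intro p
    exact (Metric.infDist_lt_iff hAne).1 (by linarith [hDpos p])
  choose anch anchA anchd using hanch
  set U : ↥(Aᶜ) → Set ↥(Aᶜ) := fun p => Metric.ball p (Metric.infDist (p : X) A / 4) with hU
  have hUopen : ∀ p, IsOpen (U p) := fun p => Metric.isOpen_ball
  have hUcover : (univ : Set ↥(Aᶜ)) ⊆ ⋃ p, U p := fun q _ =>
    mem_iUnion.2 ⟨q, Metric.mem_ball_self (by linarith [hDpos q])⟩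
  obtain ⟨ρ, hρ⟩ := PartitionOfUnity.exists_isSubordinate isClosed_univ U hUopen hUcover
  set g0 : ↥(Aᶜ) → E := fun q => ∑ᶠ p, ρ p q • f ⟨anch p, anchA p⟩ with hg0
  have hg0cont : Continuous g0 :=
    ρ.continuous_finsum_smul (fun i x _ => continuousAt_const)
  set g : X → E := fun x => if hx : x ∈ A then f ⟨x, hx⟩ else g0 ⟨x, hx⟩ with hg
  -- location of anchors of relevant bump functions
  have hloc : ∀ (q : ↥(Aᶜ)) (p : ↥(Aᶜ)), ρ p q ≠ 0 → ∀ a : A,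
      dist (anch p) (a : X) < 4 * dist (q : X) a := by
    intro q p hpq a
    have hq : q ∈ U p := hρ p (subset_closure (Function.mem_support.2 hpq))
    have hq' : dist (q : X) (p : X) < Metric.infDist (p : X) A / 4 := hq
    have hDa : Metric.infDist (p : X) A ≤ dist (p : X) a :=
      Metric.infDist_le_dist_of_mem a.2
    have htri : dist (p : X) (a : X) ≤ dist (p : X) (q : X) + dist (q : X) a :=
      dist_triangle _ _ _
    have h1 : Metric.infDist (p : X) A < (4 / 3) * dist (q : X) a := by
      rw [dist_comm (p : X) (q : X)] at htri
      linarith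
    have := anchd p
    calc dist (anch p) (a : X) ≤ dist (anch p) (p : X) + dist (p : X) (q : X)
          + dist (q : X) (a : X) := dist_triangle4 _ _ _ _
      _ < 2 * Metric.infDist (p : X) A + Metric.infDist (p : X) A / 4
          + dist (q : X) a := by
            rw [dist_comm (anch p) (p : X), dist_comm (p : X) (q : X)]
            linarith
      _ < 4 * dist (q : X) a := by linarith
  -- key estimate
  have key : ∀ (q : ↥(Aᶜ)) (a : A) (ε : ℝ),
      (∀ b : A, dist (b : X) (a : X) < 4 * dist (q : X) a → ‖f b - f a‖ ≤ ε) →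
      ‖g0 q - f a‖ ≤ ε := by
    intro q a ε hcl
    have hsum1 : ∑ p ∈ ρ.finsupport q, ρ p q = 1 := ρ.sum_finsupport (mem_univ q)
    have hε : 0 ≤ ε := by
      rcases Finset.exists_ne_zero_of_sum_ne_zero (by rw [hsum1]; norm_num :
          ∑ p ∈ ρ.finsupport q, ρ p q ≠ 0) with ⟨p, hp, hpne⟩
      exact le_trans (norm_nonneg _) (hcl ⟨anch p, anchA p⟩ (hloc q p hpne a))
    have hrepr : g0 q = ∑ p ∈ ρ.finsupport q, ρ p q • f ⟨anch p, anchA p⟩ :=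
      (ρ.sum_finsupport_smul_eq_finsum (fun p _ => f ⟨anch p, anchA p⟩)).symm
    have hfa : (f a : E) = ∑ p ∈ ρ.finsupport q, ρ p q • f a := by
      rw [← Finset.sum_smul, hsum1, one_smul]
    have hdiff : g0 q - f a = ∑ p ∈ ρ.finsupport q, ρ p q • (f ⟨anch p, anchA p⟩ - f a) := by
      rw [hrepr]
      conv_lhs => rw [hfa]
      rw [← Finset.sum_sub_distrib]
      exact Finset.sum_congr rfl fun p _ => (smul_sub _ _ _).symm
    rw [hdiff]
    calc ‖∑ p ∈ ρ.finsupport q, ρ p q • (f ⟨anch p, anchA p⟩ - f a)‖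
        ≤ ∑ p ∈ ρ.finsupport q, ‖ρ p q • (f ⟨anch p, anchA p⟩ - f a)‖ :=
          norm_sum_le _ _
      _ ≤ ∑ p ∈ ρ.finsupport q, ρ p q * ε := by
          refine Finset.sum_le_sum fun p hp => ?_
          rw [norm_smul, Real.norm_eq_abs, abs_of_nonneg (ρ.nonneg p q)]
          have hpne : ρ p q ≠ 0 := by
            simpa [Function.mem_support] using (ρ.mem_finsupport q).1 hp
          exact mul_le_mul_of_nonneg_left
            (hcl ⟨anch p, anchA p⟩ (hloc q p hpne a)) (ρ.nonneg p q)
      _ = ε := by rw [← Finset.sum_mul, hsum1, one_mul]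
  have hgA : ∀ a : A, g a = f a := by
    intro a
    simp only [hg, a.2, dif_pos]
  refine ⟨g, ?_, hgA, ?_⟩
  · rw [continuous_iff_continuousAt]
    intro x
    by_cases hx : x ∈ A
    · rw [Metric.continuousAt_iff]
      intro ε hε
      obtain ⟨δ, hδ, hδf⟩ := Metric.continuousAt_iff.1 (hf.continuousAt (x := ⟨x, hx⟩))
        (ε / 2) (by linarith)
      refine ⟨δ / 4, by linarith, fun y hy => ?_⟩
      have hgx : g x = f ⟨x, hx⟩ := hgA ⟨x, hx⟩
      by_cases hyA : y ∈ A
      · have : dist (⟨y, hyA⟩ : A) (⟨x, hx⟩ : A) < δ := by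
          rw [Subtype.dist_eq]; dsimp; linarith
        have := hδf this
        rw [hgx, hgA ⟨y, hyA⟩]
        linarith
      · have : dist (g y) (g x) ≤ ε / 2 := by
          have hgy : g y = g0 ⟨y, hyA⟩ := by simp only [hg, hyA, dif_neg, not_false_iff]
          rw [hgx, hgy, dist_eq_norm]
          refine key ⟨y, hyA⟩ ⟨x, hx⟩ (ε / 2) fun b hb => ?_
          have hb' : dist b (⟨x, hx⟩ : A) < δ := by
            rw [Subtype.dist_eq]
            dsimp at hb ⊢
            linarith
          have := hδf hb'
          rw [dist_eq_norm] at this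
          linarith
        linarith
    · have hAo : IsOpen (Aᶜ) := hA.isOpen_compl
      have hres : ContinuousOn g (Aᶜ) := by
        rw [continuousOn_iff_continuous_restrict]
        have : (Aᶜ).domRestrict g = g0 := by
          funext q
          simp only [domRestrict_apply, hg, dif_neg (q.2 : (q : X) ∈ Aᶜ)]
        rw [this]
        exact hg0cont
      exact hres.continuousAt (hAo.mem_nhds hx)
  · intro x
    by_cases hx : x ∈ A
    · rw [hgA ⟨x, hx⟩]
      exact subset_convexHull ℝ _ (mem_range_self _)
    · have hgy : g x = g0 ⟨x, hx⟩ := by simp only [hg, hx, dif_neg, not_false_iff]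
      rw [hgy]
      have hsum1 : ∑ p ∈ ρ.finsupport ⟨x, hx⟩, ρ p ⟨x, hx⟩ = 1 :=
        ρ.sum_finsupport (mem_univ _)
      have hrepr : g0 ⟨x, hx⟩ =
          ∑ p ∈ ρ.finsupport ⟨x, hx⟩, ρ p ⟨x, hx⟩ • f ⟨anch p, anchA p⟩ :=
        (ρ.sum_finsupport_smul_eq_finsum (fun p _ => f ⟨anch p, anchA p⟩)).symm
      rw [hrepr]
      exact (convex_convexHull ℝ _).sum_mem (fun p _ => ρ.nonneg p _) hsum1
        (fun p _ => subset_convexHull ℝ _ (mem_range_self _))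

/-- The Kuratowski-type embedding of a metric space into its space of bounded
continuous functions, based at `y₀`. -/
noncomputable def kur {Y : Type*} [MetricSpace Y] (y₀ : Y) : Y → (Y →ᵇ ℝ) := fun y =>
  BoundedContinuousFunction.mkOfBound
    ⟨fun t => dist y t - dist y₀ t, by fun_prop⟩ (2 * dist y y₀)
    (by
      intro s t
      rw [Real.dist_eq]
      have h1 : |dist y s - dist y₀ s| ≤ dist y y₀ := abs_dist_sub_le _ _ _
      have h2 : |dist y t - dist y₀ t| ≤ dist y y₀ := abs_dist_sub_le _ _ _
      have := abs_sub (dist y s - dist y₀ s) (dist y t - dist y₀ t)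
      calc |(dist y s - dist y₀ s) - (dist y t - dist y₀ t)|
          ≤ |dist y s - dist y₀ s| + |dist y t - dist y₀ t| := abs_sub _ _
        _ ≤ 2 * dist y y₀ := by linarith)

@[simp] theorem kur_apply {Y : Type*} [MetricSpace Y] (y₀ y t : Y) :
    kur y₀ y t = dist y t - dist y₀ t := rfl

theorem kur_isometry {Y : Type*} [MetricSpace Y] (y₀ : Y) : Isometry (kur y₀) := by
  refine Isometry.of_dist_eq fun y z => ?_
  refine le_antisymm ?_ ?_
  · refine (BoundedContinuousFunction.dist_le dist_nonneg).2 fun t => ?_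
    rw [Real.dist_eq]
    simp only [kur_apply]
    have := abs_dist_sub_le y z t
    calc |(dist y t - dist y₀ t) - (dist z t - dist y₀ t)| = |dist y t - dist z t| := by
          ring_nf
      _ ≤ dist y z := abs_dist_sub_le _ _ _
  · have := BoundedContinuousFunction.dist_coe_le_dist (f := kur y₀ y) (g := kur y₀ z) z
    rw [Real.dist_eq] at this
    simp only [kur_apply, dist_self] at this
    calc dist y z = |(dist y z - dist y₀ z) - (0 - dist y₀ z)| := by
          rw [show (dist y z - dist y₀ z) - (0 - dist y₀ z) = dist y z by ring,
            abs_of_nonneg dist_nonneg]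
      _ ≤ dist (kur y₀ y) (kur y₀ z) := by
          simpa using this

theorem kur_limit_mem {Y : Type*} [MetricSpace Y] (y₀ : Y) (y : ℕ → Y)
    (v : BoundedContinuousFunction Y ℝ) (hv : v ∈ convexHull ℝ (Set.range (kur y₀)))
    (hconv : Tendsto (fun n => kur y₀ (y n)) atTop (𝓝 v)) :
    ∃ z : Y, Tendsto y atTop (𝓝 z) ∧ kur y₀ z = v := by
  classical
  -- `y` is a Cauchy sequence
  have hcauchy : CauchySeq y := by
    have h1 : CauchySeq (fun n => kur y₀ (y n)) := hconv.cauchySeq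
    rw [Metric.cauchySeq_iff] at h1 ⊢
    intro ε hε
    obtain ⟨N, hN⟩ := h1 ε hε
    exact ⟨N, fun m hm n hn => by
      have := hN m hm n hn
      rwa [(kur_isometry y₀).dist_eq] at this⟩
  -- pointwise convergence
  have hpt : ∀ x, Tendsto (fun n => dist (y n) x - dist y₀ x) atTop (𝓝 (v x)) := by
    intro x
    have := (BoundedContinuousFunction.tendsto_iff_tendstoUniformly.1 hconv).tendsto_at x
    simpa using this
  have hlim : ∀ x, Tendsto (fun n => dist (y n) x) atTop (𝓝 (v x + dist y₀ x)) := by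
    intro x
    have := (hpt x).add_const (dist y₀ x)
    simpa using this
  -- representation of v as a finite convex combination
  rw [convexHull_eq] at hv
  obtain ⟨ι₀, t, w, z, hw0, hw1, hz, hcm⟩ := hv
  set Z : ι₀ → Y := fun i => if h : ∃ u, kur y₀ u = z i then h.choose else y₀ with hZdef
  have hZ : ∀ i ∈ t, kur y₀ (Z i) = z i := by
    intro i hi
    have hex : ∃ u, kur y₀ u = z i := hz i hi
    simp only [hZdef, dif_pos hex]
    exact hex.choose_spec
  have hvx : ∀ x, v x = ∑ i ∈ t, w i * (dist (Z i) x - dist y₀ x) := by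
    intro x
    have hv' : v = ∑ i ∈ t, w i • z i := by
      rw [← hcm, Finset.centerMass_eq_of_sum_1 _ _ hw1]
    rw [hv', BoundedContinuousFunction.coe_sum, Finset.sum_apply]
    refine Finset.sum_congr rfl fun i hi => ?_
    rw [← hZ i hi]
    simp
  have hS : ∀ x, v x + dist y₀ x = ∑ i ∈ t, w i * dist (Z i) x := by
    intro x
    rw [hvx x]
    simp only [mul_sub]
    rw [Finset.sum_sub_distrib, ← Finset.sum_mul, hw1]
    ring
  -- each distance to `Z i` converges
  have hci : ∀ i, Tendsto (fun m => dist (Z i) (y m)) atTop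
      (𝓝 (v (Z i) + dist y₀ (Z i))) := by
    intro i
    have := hlim (Z i)
    simpa [dist_comm] using this
  -- the weighted sum of limit distances vanishes
  have hsum0 : ∑ i ∈ t, w i * (v (Z i) + dist y₀ (Z i)) = 0 := by
    have T1 : Tendsto (fun m => ∑ i ∈ t, w i * dist (Z i) (y m)) atTop
        (𝓝 (∑ i ∈ t, w i * (v (Z i) + dist y₀ (Z i)))) :=
      tendsto_finset_sum _ fun i _ => (hci i).const_mul (w i)
    have T2 : Tendsto (fun m => ∑ i ∈ t, w i * dist (Z i) (y m)) atTop (𝓝 0) := by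
      have hrw : (fun m => ∑ i ∈ t, w i * dist (Z i) (y m))
          = fun m => v (y m) + dist y₀ (y m) := by
        funext m
        rw [hS]
      rw [hrw]
      rw [Metric.tendsto_atTop]
      intro ε hε
      rw [Metric.cauchySeq_iff] at hcauchy
      obtain ⟨N, hN⟩ := hcauchy (ε / 2) (by linarith)
      refine ⟨N, fun m hm => ?_⟩
      have hub : v (y m) + dist y₀ (y m) ≤ ε / 2 := by
        refine le_of_tendsto (hlim (y m)) ?_
        filter_upwards [eventually_ge_atTop N] with n hn
        exact (hN n hn m hm).le
      have hlb : 0 ≤ v (y m) + dist y₀ (y m) := by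
        refine ge_of_tendsto (hlim (y m)) ?_
        filter_upwards with n
        exact dist_nonneg
      rw [Real.dist_eq, sub_zero, abs_of_nonneg hlb]
      linarith
    exact tendsto_nhds_unique T1 T2
  -- find an index with positive weight; its distance limit is zero
  obtain ⟨i, hit, hwi⟩ : ∃ i ∈ t, w i ≠ 0 :=
    Finset.exists_ne_zero_of_sum_ne_zero (by rw [hw1]; norm_num)
  have hterm : ∀ j ∈ t, 0 ≤ w j * (v (Z j) + dist y₀ (Z j)) := by
    intro j hj
    refine mul_nonneg (hw0 j hj) ?_
    refine ge_of_tendsto (hci j) ?_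
    filter_upwards with n
    exact dist_nonneg
  have hzero : w i * (v (Z i) + dist y₀ (Z i)) = 0 :=
    (Finset.sum_eq_zero_iff_of_nonneg hterm).1 hsum0 i hit
  have hc0 : v (Z i) + dist y₀ (Z i) = 0 := by
    rcases mul_eq_zero.1 hzero with h | h
    · exact absurd h hwi
    · exact h
  have hyz : Tendsto y atTop (𝓝 (Z i)) := by
    rw [tendsto_iff_dist_tendsto_zero]
    have := hci i
    rw [hc0] at this
    simpa [dist_comm] using this
  refine ⟨Z i, hyz, ?_⟩
  exact tendsto_nhds_unique (((kur_isometry y₀).continuous.tendsto _).comp hyz) hconv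

set_option maxHeartbeats 1000000 in
set_option synthInstance.maxHeartbeats 400000 in
theorem fiberANE_of_fiberANR {B0 : Type u} [TopologicalSpace B0] [MetrizableSpace B0]
    {Y : Type u} [TopologicalSpace Y] {πY : Y → B0} (h : IsFiberANR B0 Y πY) :
    IsFiberANE B0 Y πY := by
  classical
  obtain ⟨hYmet, hπY, hanr⟩ := h
  refine ⟨hYmet, hπY, ?_⟩
  intro X tX hXmet πX hπX A hAcl f hfcont hffp
  rcases A.eq_empty_or_nonempty with rfl | hAne
  · haveI : IsEmpty ↥(∅ : Set X) := ⟨fun u => Set.notMem_empty _ u.2⟩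
    refine ⟨∅, by simp [nhdsSet_empty], isEmptyElim, ?_, fun u => isEmptyElim u,
      fun a ha => absurd ha (Set.notMem_empty a)⟩
    exact continuous_def.2 fun s _ => by
      rw [Set.eq_empty_of_isEmpty (isEmptyElim ⁻¹' s)]; exact isOpen_empty
  obtain ⟨x₀, hx₀⟩ := hAne
  haveI := hYmet
  letI : MetricSpace Y := metrizableSpaceMetric Y
  letI : MetricSpace X := metrizableSpaceMetric X
  set y₀ : Y := f ⟨x₀, hx₀⟩ with hy₀
  set φ : Y → (Y →ᵇ ℝ) := kur y₀ with hφdef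
  set H : Set (Y →ᵇ ℝ) := convexHull ℝ (Set.range φ) with hHdef
  set Q := B0 × ↥H with hQdef
  set jQ : Y → Q := fun y' => (πY y', ⟨φ y', subset_convexHull ℝ _ (mem_range_self _)⟩)
    with hjQdef
  have hφcont : Continuous φ := (kur_isometry y₀).continuous
  have hjQcont : Continuous jQ := hπY.prodMk (hφcont.subtype_mk _)
  have hjQemb : IsEmbedding jQ := by
    refine IsEmbedding.of_comp hjQcont (continuous_subtype_val.comp continuous_snd) ?_
    exact (kur_isometry y₀).isEmbedding
  letI : MetricSpace B0 := metrizableSpaceMetric B0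
  letI : MetricSpace Q := inferInstanceAs (MetricSpace (B0 × ↥H))
  haveI : SequentialSpace Q := inferInstance
  have hjQrange : IsClosed (Set.range jQ) := by
    refine IsSeqClosed.isClosed ?_
    intro u q hu hq
    have hsel : ∀ n, ∃ y', jQ y' = u n := hu
    choose ys hys using hsel
    have h2 : Tendsto (fun n => ((u n).2 : Y →ᵇ ℝ)) atTop (𝓝 (q.2 : Y →ᵇ ℝ)) :=
      (continuous_subtype_val.tendsto _).comp ((continuous_snd.tendsto _).comp hq)
    have hφconv : Tendsto (fun n => φ (ys n)) atTop (𝓝 (q.2 : Y →ᵇ ℝ)) := by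
      have : (fun n => φ (ys n)) = fun n => ((u n).2 : Y →ᵇ ℝ) := by
        funext n; rw [← hys n]
      rw [this]; exact h2
    obtain ⟨z, hyz, hφz⟩ := kur_limit_mem y₀ ys (q.2 : Y →ᵇ ℝ) q.2.2 hφconv
    have h1 : Tendsto (fun n => (u n).1) atTop (𝓝 q.1) := (continuous_fst.tendsto _).comp hq
    have h1' : Tendsto (fun n => πY (ys n)) atTop (𝓝 q.1) := by
      have : (fun n => πY (ys n)) = fun n => (u n).1 := by funext n; rw [← hys n]
      rw [this]; exact h1
    have hb : πY z = q.1 :=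
      tendsto_nhds_unique ((hπY.tendsto _).comp hyz) h1'
    exact ⟨z, Prod.ext hb (Subtype.ext hφz)⟩
  obtain ⟨U, hU, r, hrcont, hrmem, hrfp, hrid⟩ :=
    hanr Q inferInstance inferInstance Prod.fst continuous_fst jQ ⟨hjQemb, hjQrange⟩
      (fun _ => rfl)
  -- extend φ ∘ f over X by the Dugundji extension
  obtain ⟨G, hGcont, hGA, hGhull⟩ :=
    dugundji_extension A hAcl ⟨x₀, hx₀⟩ (fun a => φ (f a)) (hφcont.comp hfcont)
  have hGH : ∀ x, G x ∈ H := fun x =>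
    convexHull_mono (range_comp_subset_range f φ) (hGhull x)
  set Gq : X → Q := fun x => (πX x, ⟨G x, hGH x⟩) with hGqdef
  have hGqcont : Continuous Gq := hπX.prodMk (hGcont.subtype_mk _)
  have hGqA : ∀ a : A, Gq a = jQ (f a) := fun a =>
    Prod.ext (hffp a).symm (Subtype.ext (hGA a))
  obtain ⟨O, hOopen, hOsub, hOU⟩ := mem_nhdsSet_iff_exists.1 hU
  set V : Set X := Gq ⁻¹' O with hVdef
  have hV : V ∈ nhdsSet A := by
    refine mem_nhdsSet_iff_exists.2 ⟨V, hOopen.preimage hGqcont, ?_, subset_rfl⟩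
    intro a ha
    show Gq a ∈ O
    rw [hGqA ⟨a, ha⟩]
    exact hOsub (mem_range_self _)
  set e := IsEmbedding.toHomeomorph hjQemb with hedef
  have hecoe : ∀ y', (e y' : Q) = jQ y' := fun y' => rfl
  set g : V → Y := fun x => e.symm ⟨r ⟨Gq x, hOU x.2⟩, hrmem _⟩ with hgdef
  have hgcont : Continuous g := by
    refine e.symm.continuous.comp ?_
    exact (hrcont.comp ((hGqcont.comp continuous_subtype_val).subtype_mk _)).subtype_mk _
  have hjg : ∀ x : V, jQ (g x) = r ⟨Gq x, hOU x.2⟩ := by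
    intro x
    have := e.apply_symm_apply ⟨r ⟨Gq x, hOU x.2⟩, hrmem _⟩
    calc jQ (g x) = (e (g x) : Q) := (hecoe _).symm
      _ = r ⟨Gq x, hOU x.2⟩ := by rw [hgdef]; exact congrArg Subtype.val this
  refine ⟨V, hV, g, hgcont, ?_, ?_⟩
  · intro x
    have h1 : πY (g x) = (jQ (g x)).1 := rfl
    rw [h1, hjg x, hrfp ⟨Gq x, hOU x.2⟩]
  · intro a ha hu
    have hmem : Gq a ∈ Set.range jQ := ⟨f ⟨a, ha⟩, (hGqA ⟨a, ha⟩).symm⟩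
    have : jQ (g ⟨a, hu⟩) = Gq a := by
      rw [hjg ⟨a, hu⟩]
      exact hrid ⟨Gq a, hOU hu⟩ hmem
    apply hjQemb.injective
    rw [this, hGqA ⟨a, ha⟩]

end Auxiliary

/-- The fiber product over `B0` of two `ANR_{B0}`-spaces is an `ANR_{B0}`-space. -/
theorem fiberANR_fiberProduct (B0 : Type u) [TopologicalSpace B0] [MetrizableSpace B0]
    (Y1 : Type u) [TopologicalSpace Y1] (π1 : Y1 → B0)
    (Y2 : Type u) [TopologicalSpace Y2] (π2 : Y2 → B0)
    (h1 : IsFiberANR B0 Y1 π1) (h2 : IsFiberANR B0 Y2 π2) :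
    IsFiberANR B0 {y : Y1 × Y2 // π1 y.1 = π2 y.2} (fun y => π1 y.1.1) := by
  classical
  haveI := h1.1
  haveI := h2.1
  have hπ1 : Continuous π1 := h1.2.1
  have hπ2 : Continuous π2 := h2.2.1
  haveI : MetrizableSpace {y : Y1 × Y2 // π1 y.1 = π2 y.2} :=
    inferInstanceAs (MetrizableSpace ↥{y : Y1 × Y2 | π1 y.1 = π2 y.2})
  refine ⟨inferInstance, hπ1.comp (continuous_fst.comp continuous_subtype_val), ?_⟩
  intro X tX hXmet πX hπX i hi hifp
  have hANE1 := fiberANE_of_fiberANR h1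
  have hANE2 := fiberANE_of_fiberANR h2
  set A : Set X := Set.range i with hAdef
  have hAcl : IsClosed A := hi.isClosed_range
  set e := IsEmbedding.toHomeomorph hi.isEmbedding with hedef
  set finv : A → {y : Y1 × Y2 // π1 y.1 = π2 y.2} := fun a => e.symm a with hfinvdef
  have hfinv : ∀ a : A, i (finv a) = (a : X) := fun a =>
    congrArg Subtype.val (e.apply_symm_apply a)
  have hfinvi : ∀ (z : {y : Y1 × Y2 // π1 y.1 = π2 y.2}) (h : i z ∈ A), finv ⟨i z, h⟩ = z := by
    intro z h
    have : (⟨i z, h⟩ : A) = e z := Subtype.ext rfl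
    rw [hfinvdef]
    show e.symm (⟨i z, h⟩ : A) = z
    rw [this, e.symm_apply_apply]
  have hfinvcont : Continuous finv := e.symm.continuous
  set f1 : A → Y1 := fun a => ((finv a : {y : Y1 × Y2 // π1 y.1 = π2 y.2}) : Y1 × Y2).1 with hf1def
  set f2 : A → Y2 := fun a => ((finv a : {y : Y1 × Y2 // π1 y.1 = π2 y.2}) : Y1 × Y2).2 with hf2def
  have hf1cont : Continuous f1 :=
    continuous_fst.comp ((continuous_subtype_val.comp hfinvcont))
  have hf2cont : Continuous f2 :=
    continuous_snd.comp ((continuous_subtype_val.comp hfinvcont))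
  have hfp0 : ∀ a : A, π1 (f1 a) = πX a := by
    intro a
    have := hifp (finv a)
    rw [hfinv a] at this
    exact this.symm
  have hfp1 : ∀ a : A, π2 (f2 a) = πX a := by
    intro a
    rw [← (finv a).2]
    exact hfp0 a
  obtain ⟨U1, hU1, g1, hg1c, hg1fp, hg1ext⟩ :=
    hANE1.2.2 X tX hXmet πX hπX A hAcl f1 hf1cont hfp0
  obtain ⟨U2, hU2, g2, hg2c, hg2fp, hg2ext⟩ :=
    hANE2.2.2 X tX hXmet πX hπX A hAcl f2 hf2cont hfp1
  refine ⟨U1 ∩ U2, Filter.inter_mem hU1 hU2, ?_⟩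
  have hpair : ∀ u : ↥(U1 ∩ U2),
      π1 (g1 ⟨u, u.2.1⟩) = π2 (g2 ⟨u, u.2.2⟩) := by
    intro u
    rw [hg1fp ⟨u, u.2.1⟩, hg2fp ⟨u, u.2.2⟩]
  set r : ↥(U1 ∩ U2) → X := fun u =>
    i ⟨(g1 ⟨u, u.2.1⟩, g2 ⟨u, u.2.2⟩), hpair u⟩ with hrdef
  have hrc : Continuous r := by
    refine hi.continuous.comp ?_
    refine Continuous.subtype_mk ?_ _
    exact (hg1c.comp (continuous_subtype_val.subtype_mk _)).prodMk
      (hg2c.comp (continuous_subtype_val.subtype_mk _))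
  refine ⟨r, hrc, fun u => mem_range_self _, ?_, ?_⟩
  · intro u
    have := hifp ⟨(g1 ⟨u, u.2.1⟩, g2 ⟨u, u.2.2⟩), hpair u⟩
    rw [hrdef]
    dsimp only
    rw [this]
    exact hg1fp ⟨u, u.2.1⟩
  · intro u hu
    obtain ⟨z, hz⟩ := hu
    have ha : (u : X) ∈ A := ⟨z, hz⟩
    have e1 : g1 ⟨u, u.2.1⟩ = f1 ⟨u, ha⟩ := hg1ext u ha u.2.1
    have e2 : g2 ⟨u, u.2.2⟩ = f2 ⟨u, ha⟩ := hg2ext u ha u.2.2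
    have hz' : finv ⟨u, ha⟩ = z := by
      have : (⟨(u : X), ha⟩ : A) = ⟨i z, hz ▸ ha⟩ := Subtype.ext hz.symm
      rw [this, hfinvi]
    have : (⟨(g1 ⟨u, u.2.1⟩, g2 ⟨u, u.2.2⟩), hpair u⟩ :
        {y : Y1 × Y2 // π1 y.1 = π2 y.2}) = z := by
      refine Subtype.ext (Prod.ext ?_ ?_)
      · show g1 ⟨↑u, u.2.1⟩ = ((z : Y1 × Y2)).1
        rw [e1, ← hz']
      · show g2 ⟨↑u, u.2.2⟩ = ((z : Y1 × Y2)).2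
        rw [e2, ← hz']
    rw [hrdef]
    dsimp only
    rw [this, hz]
end
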